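/- For complex q, z with |q| < 1 and |zq| < 1, Σ_{n≥0} z^{2n} q^{n²+n} / (−zq; q²)_{n+1} = Σ_{n≥0} (zq; q²)_n (−zq)ⁿ. -/

import Mathlib

open scoped BigOperators

/-- Finite q-Pochhammer symbol `(a; q)_n`. -/
noncomputable def qPoch (a q : ℂ) (n : ℕ) : ℂ :=
  ∏ k ∈ Finset.range n, (1 - a * q ^ k)

/-- Infinite q-Pochhammer symbol `(a; q)_∞`. -/
noncomputable def qPochInf (a q : ℂ) : ℂ :=
  ∏' k : ℕ, (1 - a * q ^ k)

set_option linter.unusedSectionVars false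

lemma qPoch_ne_zero {a q : ℂ} (ha : ‖a‖ < 1) (hq : ‖q‖ ≤ 1) (n : ℕ) :
    qPoch a q n ≠ 0 := by
  apply Finset.prod_ne_zero_iff.2
  intro k _
  intro h
  have h1 : (1:ℂ) = a * q ^ k := by linear_combination h
  have : ‖a * q ^ k‖ < 1 := by
    calc ‖a * q ^ k‖ = ‖a‖ * ‖q‖ ^ k := by simp [norm_pow]
    _ ≤ ‖a‖ * 1 := by
        apply mul_le_mul_of_nonneg_left _ (norm_nonneg a)
        exact pow_le_one₀ (norm_nonneg q) hq
    _ < 1 := by simpa using ha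
  rw [← h1] at this
  simp at this

lemma qPoch_succ (a q : ℂ) (n : ℕ) :
    qPoch a q (n + 1) = qPoch a q n * (1 - a * q ^ n) :=
  Finset.prod_range_succ _ n

lemma qPoch_succ' (a q : ℂ) (n : ℕ) :
    qPoch a q (n + 1) = qPoch (a * q) q n * (1 - a) := by
  rw [qPoch, Finset.prod_range_succ']
  simp only [pow_zero, mul_one, qPoch]
  congr 1
  apply Finset.prod_congr rfl
  intro k _
  ring

/-- Gaussian binomial coefficient in base `Q`. -/
noncomputable def gB (Q : ℂ) (N k : ℕ) : ℂ :=
  if k ≤ N then qPoch Q Q N / (qPoch Q Q k * qPoch Q Q (N - k)) else 0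

lemma qPoch_zero (a q : ℂ) : qPoch a q 0 = 1 := by simp [qPoch]

section gB
variable {Q : ℂ} (hQ : ‖Q‖ < 1)
include hQ

lemma P_ne_zero (n : ℕ) : qPoch Q Q n ≠ 0 := qPoch_ne_zero hQ hQ.le n

lemma P_one_sub_ne_zero (n : ℕ) : (1 : ℂ) - Q ^ (n+1) ≠ 0 := by
  intro h
  have h1 : (1:ℂ) = Q ^ (n+1) := by linear_combination h
  have : ‖Q ^ (n+1)‖ < 1 := by
    rw [norm_pow]
    exact pow_lt_one₀ (norm_nonneg Q) hQ (Nat.succ_ne_zero n)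
  rw [← h1] at this; simp at this

omit hQ in
lemma P_succ (n : ℕ) : qPoch Q Q (n + 1) = qPoch Q Q n * (1 - Q ^ (n+1)) := by
  rw [qPoch_succ]; ring_nf

lemma gB_zero (N : ℕ) : gB Q N 0 = 1 := by
  rw [gB, if_pos (Nat.zero_le N), Nat.sub_zero, qPoch_zero, one_mul,
    div_self (P_ne_zero hQ N)]

lemma gB_self (N : ℕ) : gB Q N N = 1 := by
  rw [gB, if_pos le_rfl, Nat.sub_self, qPoch_zero, mul_one,
    div_self (P_ne_zero hQ N)]

omit hQ in
lemma gB_symm {N k : ℕ} (h : k ≤ N) : gB Q N k = gB Q N (N - k) := by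
  rw [gB, gB, if_pos h, if_pos (Nat.sub_le N k), Nat.sub_sub_self h, mul_comm]

/-- Pascal rule 1: `[N+1, k+1] = [N, k] + Q^(k+1) [N, k+1]`. -/
lemma gB_pascal1 (N k : ℕ) :
    gB Q (N + 1) (k + 1) = gB Q N k + Q ^ (k + 1) * gB Q N (k + 1) := by
  rcases le_or_gt (k+1) N with h | h
  · have hk : k ≤ N := Nat.le_of_succ_le h
    rw [gB, gB, gB, if_pos (by omega), if_pos hk, if_pos h]
    have e1 : N + 1 - (k + 1) = N - k := by omega
    have e2 : N - k = (N - (k+1)) + 1 := by omega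
    have hxy : Q ^ (N+1) = Q ^ (k+1) * Q ^ (N - (k+1) + 1) := by
      rw [← pow_add]; congr 1; omega
    rw [e1, P_succ N, e2, P_succ (N - (k+1)), P_succ k, hxy]
    have h1 := P_ne_zero hQ k
    have h2 := P_ne_zero hQ (N - (k+1))
    have h3 := P_ne_zero hQ N
    have h4 := P_one_sub_ne_zero hQ k
    have h5 := P_one_sub_ne_zero hQ (N - (k+1))
    set x := Q ^ (k+1)
    set y := Q ^ (N - (k+1) + 1)
    set PN := qPoch Q Q N
    set Pk := qPoch Q Q k
    set Pj := qPoch Q Q (N - (k+1))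
    field_simp
    ring
  · rcases eq_or_lt_of_le (Nat.succ_le_of_lt h) with h' | h'
    · have hkN : k = N := by omega
      subst hkN
      rw [gB_self hQ, gB_self hQ, gB, if_neg (by omega)]
      ring
    · rw [gB, gB, gB, if_neg (by omega), if_neg (by omega), if_neg (by omega)]
      ring

/-- Pascal rule 2: `[N+1, k+1] = [N, k+1] + Q^(N-k) [N, k]`, for `k ≤ N`. -/
lemma gB_pascal2 {N k : ℕ} (hk : k ≤ N) :
    gB Q (N + 1) (k + 1) = gB Q N (k + 1) + Q ^ (N - k) * gB Q N k := by
  rcases le_or_gt (k+1) N with h | h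
  · rw [gB, gB, gB, if_pos (by omega), if_pos h, if_pos hk]
    have e1 : N + 1 - (k + 1) = N - k := by omega
    have e2 : N - k = (N - (k+1)) + 1 := by omega
    have hxy : Q ^ (N+1) = Q ^ (k+1) * Q ^ (N - (k+1) + 1) := by
      rw [← pow_add]; congr 1; omega
    rw [e1, e2, P_succ N, P_succ (N - (k+1)), P_succ k, hxy]
    have h1 := P_ne_zero hQ k
    have h2 := P_ne_zero hQ (N - (k+1))
    have h4 := P_one_sub_ne_zero hQ k
    have h5 := P_one_sub_ne_zero hQ (N - (k+1))
    set x := Q ^ (k+1)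
    set y := Q ^ (N - (k+1) + 1)
    set PN := qPoch Q Q N
    set Pk := qPoch Q Q k
    set Pj := qPoch Q Q (N - (k+1))
    field_simp
    ring
  · have hkN : k = N := by omega
    subst hkN
    rw [gB_self hQ, gB_self hQ, gB, if_neg (by omega), Nat.sub_self]
    simp

end gB

lemma weierstrass_prod (s : Finset ℕ) (f : ℕ → ℝ) (h0 : ∀ i ∈ s, 0 ≤ f i)
    (h1 : ∀ i ∈ s, f i ≤ 1) : 1 - ∑ i ∈ s, f i ≤ ∏ i ∈ s, (1 - f i) := by
  induction s using Finset.cons_induction with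
  | empty => simp
  | cons i s hi ih =>
    rw [Finset.sum_cons, Finset.prod_cons]
    have hfi0 : 0 ≤ f i := h0 i (Finset.mem_cons_self i s)
    have hfi1 : f i ≤ 1 := h1 i (Finset.mem_cons_self i s)
    have ih' := ih (fun j hj => h0 j (Finset.mem_cons_of_mem hj))
      (fun j hj => h1 j (Finset.mem_cons_of_mem hj))
    have hs0 : 0 ≤ ∑ j ∈ s, f j :=
      Finset.sum_nonneg fun j hj => h0 j (Finset.mem_cons_of_mem hj)
    nlinarith [Finset.prod_le_one (fun j hj => by linarith [h0 j (Finset.mem_cons_of_mem hj), h1 j (Finset.mem_cons_of_mem hj)] : ∀ j ∈ s, (0:ℝ) ≤ 1 - f j) (fun j hj => by linarith [h0 j (Finset.mem_cons_of_mem hj)] : ∀ j ∈ s, 1 - f j ≤ 1)]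

section bounds
variable {Q : ℂ} (hQ : ‖Q‖ < 1)
include hQ

lemma P_norm_upper (N : ℕ) : ‖qPoch Q Q N‖ ≤ Real.exp ((1 - ‖Q‖)⁻¹) := by
  set t := ‖Q‖ with ht
  have ht0 : 0 ≤ t := norm_nonneg Q
  have h1t : 0 < 1 - t := by linarith
  calc ‖qPoch Q Q N‖ = ∏ k ∈ Finset.range N, ‖1 - Q * Q ^ k‖ := by
        rw [qPoch]; exact norm_prod _ _
    _ ≤ ∏ k ∈ Finset.range N, (1 + t ^ (k+1)) := by
        apply Finset.prod_le_prod (fun k _ => norm_nonneg _)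
        intro k _
        calc ‖1 - Q * Q ^ k‖ ≤ ‖(1:ℂ)‖ + ‖Q * Q ^ k‖ := norm_sub_le _ _
          _ = 1 + t ^ (k+1) := by
              rw [norm_one, norm_mul, norm_pow, pow_succ, ht]; ring_nf
    _ ≤ ∏ k ∈ Finset.range N, Real.exp (t ^ (k+1)) := by
        apply Finset.prod_le_prod (fun k _ => by positivity)
        intro k _
        have := Real.add_one_le_exp (t ^ (k+1))
        linarith
    _ = Real.exp (∑ k ∈ Finset.range N, t ^ (k+1)) := (Real.exp_sum _ _).symm
    _ ≤ Real.exp ((1 - t)⁻¹) := by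
        apply Real.exp_le_exp.2
        calc ∑ k ∈ Finset.range N, t ^ (k+1)
            ≤ ∑ k ∈ Finset.range N, t ^ k := by
              apply Finset.sum_le_sum
              intro k _
              calc t ^ (k+1) = t * t ^ k := by rw [pow_succ]; ring
                _ ≤ 1 * t ^ k := by
                    apply mul_le_mul_of_nonneg_right hQ.le (pow_nonneg ht0 k)
                _ = t ^ k := one_mul _
          _ ≤ ∑' k, t ^ k := Summable.sum_le_tsum _ (fun k _ => pow_nonneg ht0 k)
              (summable_geometric_of_lt_one ht0 hQ)
          _ = (1 - t)⁻¹ := tsum_geometric_of_lt_one ht0 hQ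

lemma P_norm_lower : ∃ δ : ℝ, 0 < δ ∧ ∀ N, δ ≤ ‖qPoch Q Q N‖ := by
  set t := ‖Q‖ with ht
  have ht0 : 0 ≤ t := norm_nonneg Q
  have h1t : 0 < 1 - t := by linarith
  -- choose K with tail sums ≤ 1/2
  obtain ⟨K, hK⟩ := exists_pow_lt_of_lt_one (by positivity : (0:ℝ) < (1-t)/2) hQ
  have real_prod_pos : ∀ M, 0 < ∏ k ∈ Finset.range M, (1 - t ^ (k+1)) := by
    intro M
    apply Finset.prod_pos
    intro k _
    have : t ^ (k+1) < 1 := pow_lt_one₀ ht0 hQ (Nat.succ_ne_zero k)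
    linarith
  have tail_bound : ∀ N, K ≤ N → ∑ k ∈ Finset.Ico K N, t ^ (k+1) ≤ 1/2 := by
    intro N hKN
    rw [Finset.sum_Ico_eq_sum_range]
    have : ∀ j ∈ Finset.range (N - K), t ^ (K + j + 1) = t ^ (K+1) * t ^ j := by
      intro j _; rw [← pow_add]; congr 1; omega
    rw [Finset.sum_congr rfl this, ← Finset.mul_sum]
    have hsum : ∑ j ∈ Finset.range (N - K), t ^ j ≤ (1 - t)⁻¹ :=
      le_trans (Summable.sum_le_tsum _ (fun k _ => pow_nonneg ht0 k)
        (summable_geometric_of_lt_one ht0 hQ))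
        (le_of_eq (tsum_geometric_of_lt_one ht0 hQ))
    calc t ^ (K+1) * ∑ j ∈ Finset.range (N - K), t ^ j
        ≤ t ^ (K+1) * (1 - t)⁻¹ := by
          apply mul_le_mul_of_nonneg_left hsum (pow_nonneg ht0 _)
      _ ≤ t ^ K * (1 - t)⁻¹ := by
          apply mul_le_mul_of_nonneg_right _ (by positivity)
          calc t ^ (K+1) = t * t ^ K := by rw [pow_succ]; ring
            _ ≤ 1 * t ^ K := mul_le_mul_of_nonneg_right hQ.le (pow_nonneg ht0 K)
            _ = t ^ K := one_mul _
      _ ≤ ((1-t)/2) * (1 - t)⁻¹ := by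
          apply mul_le_mul_of_nonneg_right hK.le (by positivity)
      _ = 1/2 := by field_simp
  set δ := (∏ k ∈ Finset.range K, (1 - t ^ (k+1))) * (1/2) with hδ
  refine ⟨δ, mul_pos (real_prod_pos K) one_half_pos, ?_⟩
  intro N
  have step1 : ∏ k ∈ Finset.range N, (1 - t ^ (k+1)) ≤ ‖qPoch Q Q N‖ := by
    rw [qPoch, norm_prod]
    apply Finset.prod_le_prod
    · intro k _
      have : t ^ (k+1) < 1 := pow_lt_one₀ ht0 hQ (Nat.succ_ne_zero k)
      linarith
    · intro k _
      have h1 : ‖Q * Q ^ k‖ = t ^ (k+1) := by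
        rw [norm_mul, norm_pow, pow_succ]; ring
      calc 1 - t ^ (k+1) = ‖(1:ℂ)‖ - ‖Q * Q ^ k‖ := by rw [norm_one, h1]
        _ ≤ ‖1 - Q * Q ^ k‖ := norm_sub_norm_le _ _
  refine le_trans ?_ step1
  rcases le_or_gt N K with hNK | hNK
  · have : ∏ k ∈ Finset.range K, (1 - t ^ (k+1))
        ≤ ∏ k ∈ Finset.range N, (1 - t ^ (k+1)) := by
      rw [← Finset.prod_range_mul_prod_Ico _ hNK]
      have h2 : ∏ k ∈ Finset.Ico N K, (1 - t ^ (k+1)) ≤ 1 := by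
        apply Finset.prod_le_one
        · intro k _
          have : t ^ (k+1) < 1 := pow_lt_one₀ ht0 hQ (Nat.succ_ne_zero k)
          linarith
        · intro k _
          have : 0 ≤ t ^ (k+1) := pow_nonneg ht0 _
          linarith
      calc (∏ k ∈ Finset.range N, (1 - t ^ (k+1))) * ∏ k ∈ Finset.Ico N K, (1 - t ^ (k+1))
          ≤ (∏ k ∈ Finset.range N, (1 - t ^ (k+1))) * 1 :=
            mul_le_mul_of_nonneg_left h2 (real_prod_pos N).le
        _ = _ := mul_one _
    calc δ ≤ (∏ k ∈ Finset.range K, (1 - t ^ (k+1))) * 1 := by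
          rw [hδ]
          apply mul_le_mul_of_nonneg_left (by norm_num) (real_prod_pos K).le
      _ = ∏ k ∈ Finset.range K, (1 - t ^ (k+1)) := mul_one _
      _ ≤ _ := this
  · rw [← Finset.prod_range_mul_prod_Ico _ hNK.le, hδ]
    apply mul_le_mul_of_nonneg_left _ (real_prod_pos K).le
    have := weierstrass_prod (Finset.Ico K N) (fun k => t ^ (k+1))
      (fun k _ => pow_nonneg ht0 _)
      (fun k _ => (pow_lt_one₀ ht0 hQ (Nat.succ_ne_zero k)).le)
    have h3 := tail_bound N hNK.le
    linarith

lemma gB_bound : ∃ K : ℝ, 0 < K ∧ ∀ N k, ‖gB Q N k‖ ≤ K := by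
  obtain ⟨δ, hδ0, hδ⟩ := P_norm_lower hQ
  refine ⟨Real.exp ((1 - ‖Q‖)⁻¹) / (δ * δ), by positivity, ?_⟩
  intro N k
  rw [gB]
  split_ifs with h
  · rw [norm_div, norm_mul]
    apply div_le_div₀ (by positivity) (P_norm_upper hQ N) (by positivity)
    exact mul_le_mul (hδ k) (hδ (N - k)) hδ0.le (le_trans hδ0.le (hδ k))
  · simp; positivity

lemma summable_gB {a : ℂ} (ha : ‖a‖ < 1) (n : ℕ) :
    Summable (fun m => gB Q (n + m) m * a ^ m) := by
  obtain ⟨K, hK0, hK⟩ := gB_bound hQ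
  apply Summable.of_norm_bounded (g := fun m => K * ‖a‖ ^ m)
    (((summable_geometric_of_lt_one (norm_nonneg a) ha)).mul_left K)
  intro m
  rw [norm_mul, norm_pow]
  exact mul_le_mul_of_nonneg_right (hK _ _) (pow_nonneg (norm_nonneg a) m)

end bounds

lemma one_sub_ne_zero_of_norm_lt_one {a : ℂ} (ha : ‖a‖ < 1) : (1 : ℂ) - a ≠ 0 := by
  intro h
  have h1 : (1:ℂ) = a := by linear_combination h
  rw [← h1] at ha; simp at ha

section key
variable {Q : ℂ} (hQ : ‖Q‖ < 1)
include hQ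

lemma tsum_gB (n : ℕ) : ∀ a : ℂ, ‖a‖ < 1 →
    ∑' m, gB Q (n + m) m * a ^ m = (qPoch a Q (n + 1))⁻¹ := by
  induction n with
  | zero =>
    intro a ha
    have h1 : ∀ m, gB Q (0 + m) m * a ^ m = a ^ m := fun m => by
      rw [Nat.zero_add, gB_self hQ, one_mul]
    rw [tsum_congr h1, tsum_geometric_of_norm_lt_one ha]
    congr 1
    simp [qPoch]
  | succ n IH =>
    intro a ha
    have haQ : ‖a * Q‖ < 1 := by
      rw [norm_mul]
      calc ‖a‖ * ‖Q‖ ≤ 1 * ‖Q‖ :=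
            mul_le_mul_of_nonneg_right ha.le (norm_nonneg Q)
        _ = ‖Q‖ := one_mul _
        _ < 1 := hQ
    have hS : Summable (fun m => gB Q (n + 1 + m) m * a ^ m) := summable_gB hQ ha (n+1)
    have hg : Summable (fun j => gB Q (n + j) j * (a * Q) ^ j) := summable_gB hQ haQ n
    have hS1 : Summable (fun m => a * (gB Q (n + 1 + m) m * a ^ m)) := hS.mul_left a
    have hS2 : Summable (fun m => gB Q (n + (m + 1)) (m + 1) * (a * Q) ^ (m + 1)) :=
      (summable_nat_add_iff (f := fun j => gB Q (n + j) j * (a * Q) ^ j) 1).2 hg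
    have key : ∀ m, gB Q (n + 1 + (m + 1)) (m + 1) * a ^ (m + 1)
        = a * (gB Q (n + 1 + m) m * a ^ m)
          + gB Q (n + (m + 1)) (m + 1) * (a * Q) ^ (m + 1) := by
      intro m
      have h1 : n + 1 + (m + 1) = (n + m + 1) + 1 := by omega
      rw [h1, gB_pascal1 hQ (n + m + 1) m]
      have h2 : n + 1 + m = n + m + 1 := by omega
      have h3 : n + (m + 1) = n + m + 1 := by omega
      rw [h2, h3, mul_pow]
      ring
    have htail : ∑' m, gB Q (n + (m + 1)) (m + 1) * (a * Q) ^ (m + 1)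
        = (qPoch (a * Q) Q (n + 1))⁻¹ - 1 := by
      have h0 := Summable.tsum_eq_zero_add hg
      rw [IH (a * Q) haQ] at h0
      have hg0 : gB Q (n + 0) 0 * (a * Q) ^ 0 = 1 := by
        rw [gB_zero hQ, pow_zero, one_mul]
      rw [hg0] at h0
      linear_combination -h0
    have heq : ∑' m, gB Q (n + 1 + m) m * a ^ m
        = 1 + (a * ∑' m, gB Q (n + 1 + m) m * a ^ m
            + ((qPoch (a * Q) Q (n + 1))⁻¹ - 1)) := by
      calc ∑' m, gB Q (n + 1 + m) m * a ^ m
          = gB Q (n + 1 + 0) 0 * a ^ 0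
            + ∑' m, gB Q (n + 1 + (m + 1)) (m + 1) * a ^ (m + 1) :=
            Summable.tsum_eq_zero_add hS
        _ = 1 + ∑' m, (a * (gB Q (n + 1 + m) m * a ^ m)
            + gB Q (n + (m + 1)) (m + 1) * (a * Q) ^ (m + 1)) := by
            rw [gB_zero hQ, pow_zero, one_mul, tsum_congr key]
        _ = 1 + (a * ∑' m, gB Q (n + 1 + m) m * a ^ m
            + ((qPoch (a * Q) Q (n + 1))⁻¹ - 1)) := by
            rw [Summable.tsum_add hS1 hS2, tsum_mul_left, htail]
    set S := ∑' m, gB Q (n + 1 + m) m * a ^ m with hSdef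
    set X := qPoch (a * Q) Q (n + 1) with hXdef
    have hX : X ≠ 0 := qPoch_ne_zero haQ hQ.le (n + 1)
    have h1a : (1 : ℂ) - a ≠ 0 := one_sub_ne_zero_of_norm_lt_one ha
    have hlin : (1 - a) * S = X⁻¹ := by linear_combination heq
    have hmul : S * (X * (1 - a)) = 1 := by
      calc S * (X * (1 - a)) = ((1 - a) * S) * X := by ring
        _ = X⁻¹ * X := by rw [hlin]
        _ = 1 := inv_mul_cancel₀ hX
    rw [qPoch_succ' a Q (n + 1)]
    exact eq_inv_of_mul_eq_one_left hmul

end key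

lemma gB_of_gt {Q : ℂ} {N k : ℕ} (h : N < k) : gB Q N k = 0 := by
  rw [gB, if_neg (by omega)]

lemma qPoch_eq_sum {Q : ℂ} (hQ : ‖Q‖ < 1) (w : ℂ) (n : ℕ) :
    qPoch w Q n = ∑ k ∈ Finset.range (n + 1),
      (-1 : ℂ) ^ k * Q ^ (k.choose 2) * gB Q n k * w ^ k := by
  induction n with
  | zero =>
    simp [qPoch_zero, gB_zero hQ]
  | succ n IH =>
    have peel : ∑ k ∈ Finset.range (n + 2),
        (-1 : ℂ) ^ k * Q ^ (k.choose 2) * gB Q (n+1) k * w ^ k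
        = (∑ k ∈ Finset.range (n + 1),
            (-1 : ℂ) ^ (k+1) * Q ^ ((k+1).choose 2) * gB Q (n+1) (k+1) * w ^ (k+1))
          + 1 := by
      rw [Finset.sum_range_succ' (fun k => (-1 : ℂ) ^ k * Q ^ (k.choose 2) * gB Q (n+1) k * w ^ k) (n+1)]
      simp [gB_zero hQ]
    have step : ∀ k ∈ Finset.range (n + 1),
        (-1 : ℂ) ^ (k+1) * Q ^ ((k+1).choose 2) * gB Q (n+1) (k+1) * w ^ (k+1)
        = (-1 : ℂ) ^ (k+1) * Q ^ ((k+1).choose 2) * gB Q n (k+1) * w ^ (k+1)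
          - Q ^ n * w * ((-1 : ℂ) ^ k * Q ^ (k.choose 2) * gB Q n k * w ^ k) := by
      intro k hk
      rw [Finset.mem_range] at hk
      have hkn : k ≤ n := by omega
      rw [gB_pascal2 hQ hkn]
      have hch : (k+1).choose 2 = k.choose 2 + k := by
        rw [Nat.choose_succ_succ, Nat.choose_one_right, Nat.add_comm]
      have hpow : Q ^ ((k+1).choose 2) * Q ^ (n - k) = Q ^ (k.choose 2) * Q ^ n := by
        rw [← pow_add, ← pow_add, hch]
        congr 1
        omega
      have expand : (-1 : ℂ) ^ (k+1) * Q ^ ((k+1).choose 2) *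
          (gB Q n (k+1) + Q ^ (n-k) * gB Q n k) * w ^ (k+1)
          = (-1 : ℂ) ^ (k+1) * Q ^ ((k+1).choose 2) * gB Q n (k+1) * w ^ (k+1)
          + (-1 : ℂ) ^ (k+1) * (Q ^ ((k+1).choose 2) * Q ^ (n-k)) * gB Q n k * w ^ (k+1) := by
        ring
      rw [expand, hpow, pow_succ (-1 : ℂ) k, pow_succ w k]
      ring
    rw [qPoch_succ, IH, peel, Finset.sum_congr rfl step, Finset.sum_sub_distrib,
      ← Finset.mul_sum]
    have first : ∑ k ∈ Finset.range (n + 1),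
        (-1 : ℂ) ^ (k+1) * Q ^ ((k+1).choose 2) * gB Q n (k+1) * w ^ (k+1)
        = (∑ k ∈ Finset.range (n + 1),
            (-1 : ℂ) ^ k * Q ^ (k.choose 2) * gB Q n k * w ^ k) - 1 := by
      have := Finset.sum_range_succ' (fun k => (-1 : ℂ) ^ k * Q ^ (k.choose 2) * gB Q n k * w ^ k) (n+1)
      -- this : ∑ range (n+2) = (∑ k ∈ range (n+1), f (k+1)) + f 0
      have hlast : ∑ k ∈ Finset.range (n + 2),
          (-1 : ℂ) ^ k * Q ^ (k.choose 2) * gB Q n k * w ^ k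
          = ∑ k ∈ Finset.range (n + 1),
            (-1 : ℂ) ^ k * Q ^ (k.choose 2) * gB Q n k * w ^ k := by
        rw [Finset.sum_range_succ, gB_of_gt (by omega)]
        ring
      rw [hlast] at this
      have h0 : (-1 : ℂ) ^ 0 * Q ^ (Nat.choose 0 2) * gB Q n 0 * w ^ 0 = 1 := by
        simp [gB_zero hQ]
      rw [h0] at this
      linear_combination -this
    rw [first]
    ring

lemma two_mul_choose_two (n : ℕ) : 2 * n.choose 2 = n ^ 2 - n := by
  induction n with
  | zero => rfl
  | succ n IH =>
    have hch : (n+1).choose 2 = n + n.choose 2 := by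
      rw [Nat.choose_succ_succ, Nat.choose_one_right]
    rw [hch]
    have hn : n ≤ n ^ 2 := by nlinarith
    have : (n+1)^2 - (n+1) = (n^2 - n) + 2*n := by
      have : (n+1)^2 = n^2 + 2*n + 1 := by ring
      omega
    omega

theorem nu_spec_2_15 (q z : ℂ) (hq : ‖q‖ < 1) (hzq : ‖z * q‖ < 1) :
    ∑' n : ℕ, z ^ (2 * n) * q ^ (n ^ 2 + n) / qPoch (-(z * q)) (q ^ 2) (n + 1)
      = ∑' n : ℕ, qPoch (z * q) (q ^ 2) n * (-(z * q)) ^ n := by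
  set Q : ℂ := q ^ 2 with hQdef
  set w : ℂ := z * q with hwdef
  set a : ℂ := -(z * q) with hadef
  have hQ : ‖Q‖ < 1 := by
    rw [hQdef, norm_pow]
    exact pow_lt_one₀ (norm_nonneg q) hq two_ne_zero
  have hu : ‖w‖ < 1 := hzq
  have ha : ‖a‖ < 1 := by rw [hadef, norm_neg]; exact hzq
  have hu0 : 0 ≤ ‖w‖ := norm_nonneg w
  have hanorm : ‖a‖ = ‖w‖ := by rw [hadef, norm_neg]
  obtain ⟨K, hK0, hK⟩ := gB_bound hQ
  -- the two double-indexed families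
  set f : ℕ × ℕ → ℂ := fun p => z ^ (2 * p.1) * q ^ (p.1 ^ 2 + p.1)
    * (gB Q (p.1 + p.2) p.2 * a ^ p.2) with hfdef
  set g : ℕ × ℕ → ℂ := fun p => (-1 : ℂ) ^ p.2 * Q ^ (p.2.choose 2)
    * gB Q p.1 p.2 * w ^ p.2 * a ^ p.1 with hgdef
  -- basic power identity : z^(2n) q^(n²+n) = (zq)^(2n) q^(n²−n)
  have hself : ∀ n : ℕ, n ≤ n ^ 2 := fun n => by nlinarith
  have hpow : ∀ n : ℕ, z ^ (2 * n) * q ^ (n ^ 2 + n) = w ^ (2 * n) * q ^ (n ^ 2 - n) := by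
    intro n
    rw [hwdef, mul_pow, mul_assoc, ← pow_add]
    congr 2
    have := hself n
    omega
  -- pointwise equality f p = g (p.1 + p.2, p.1)
  have hfg : ∀ p : ℕ × ℕ, f p = g (p.1 + p.2, p.1) := by
    rintro ⟨n, m⟩
    show z ^ (2 * n) * q ^ (n ^ 2 + n) * (gB Q (n + m) m * a ^ m)
      = (-1 : ℂ) ^ n * Q ^ (n.choose 2) * gB Q (n + m) n * w ^ n * a ^ (n + m)
    have hsy : gB Q (n + m) n = gB Q (n + m) m := by
      rw [gB_symm (Nat.le_add_right n m)]
      congr 1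
      omega
    have hQch : Q ^ (n.choose 2) = q ^ (n ^ 2 - n) := by
      rw [hQdef, ← pow_mul]
      congr 1
      rw [← two_mul_choose_two n]
    have hsign : (-1 : ℂ) ^ n * w ^ n * a ^ n = z ^ (2 * n) * q ^ (2 * n) := by
      rw [← mul_pow, ← mul_pow]
      rw [show (-1 : ℂ) * w * a = (z * q) ^ 2 by rw [hwdef, hadef]; ring]
      rw [← pow_mul, mul_pow, Nat.mul_comm]
    have e1 : n ^ 2 + n = 2 * n + (n ^ 2 - n) := by have := hself n; omega
    rw [hsy, hQch, e1, pow_add q, pow_add a]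
    calc z ^ (2 * n) * (q ^ (2 * n) * q ^ (n ^ 2 - n)) * (gB Q (n + m) m * a ^ m)
        = ((-1 : ℂ) ^ n * w ^ n * a ^ n) * q ^ (n ^ 2 - n) * (gB Q (n + m) m * a ^ m) := by
          rw [hsign]; ring
      _ = (-1 : ℂ) ^ n * q ^ (n ^ 2 - n) * gB Q (n + m) m * w ^ n * (a ^ n * a ^ m) := by
          ring
  -- summability of f
  have hfsum : Summable f := by
    apply Summable.of_norm_bounded
      (g := fun p : ℕ × ℕ => K * ((‖w‖ ^ 2) ^ p.1 * ‖w‖ ^ p.2))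
    · apply Summable.mul_left
      exact Summable.mul_of_nonneg
        (summable_geometric_of_lt_one (by positivity) (by nlinarith))
        (summable_geometric_of_lt_one hu0 hu)
        (fun n => by positivity) (fun m => by positivity)
    · rintro ⟨n, m⟩
      show ‖z ^ (2 * n) * q ^ (n ^ 2 + n) * (gB Q (n + m) m * a ^ m)‖
        ≤ K * ((‖w‖ ^ 2) ^ n * ‖w‖ ^ m)
      rw [hpow n]
      rw [norm_mul, norm_mul, norm_mul, norm_pow, norm_pow, norm_pow, hanorm]
      have h1 : ‖q‖ ^ (n ^ 2 - n) ≤ 1 := pow_le_one₀ (norm_nonneg q) hq.le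
      have h2 : ‖gB Q (n + m) m‖ ≤ K := hK _ _
      have h3 : ‖w‖ ^ (2 * n) = (‖w‖ ^ 2) ^ n := by rw [← pow_mul]
      rw [h3]
      calc (‖w‖ ^ 2) ^ n * ‖q‖ ^ (n ^ 2 - n) * (‖gB Q (n + m) m‖ * ‖w‖ ^ m)
          ≤ (‖w‖ ^ 2) ^ n * 1 * (K * ‖w‖ ^ m) := by
            apply mul_le_mul
            · exact mul_le_mul_of_nonneg_left h1 (by positivity)
            · exact mul_le_mul_of_nonneg_right h2 (by positivity)
            · positivity
            · positivity
        _ = K * ((‖w‖ ^ 2) ^ n * ‖w‖ ^ m) := by ring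
  -- summability of g
  have hgsum : Summable g := by
    apply Summable.of_norm_bounded
      (g := fun p : ℕ × ℕ => K * (‖w‖ ^ p.1 * ‖w‖ ^ p.2))
    · apply Summable.mul_left
      exact Summable.mul_of_nonneg
        (summable_geometric_of_lt_one hu0 hu)
        (summable_geometric_of_lt_one hu0 hu)
        (fun n => by positivity) (fun m => by positivity)
    · rintro ⟨N, k⟩
      show ‖(-1 : ℂ) ^ k * Q ^ (k.choose 2) * gB Q N k * w ^ k * a ^ N‖
        ≤ K * (‖w‖ ^ N * ‖w‖ ^ k)
      simp only [norm_mul, norm_pow, norm_neg, norm_one, one_pow, one_mul, hanorm]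
      have h1 : ‖Q‖ ^ (k.choose 2) ≤ 1 := pow_le_one₀ (norm_nonneg Q) hQ.le
      have h2 : ‖gB Q N k‖ ≤ K := hK _ _
      calc ‖Q‖ ^ k.choose 2 * ‖gB Q N k‖ * ‖w‖ ^ k * ‖w‖ ^ N
          ≤ 1 * K * ‖w‖ ^ k * ‖w‖ ^ N := by
            apply mul_le_mul_of_nonneg_right _ (by positivity)
            apply mul_le_mul_of_nonneg_right _ (by positivity)
            exact mul_le_mul h1 h2 (norm_nonneg _) zero_le_one
        _ = K * (‖w‖ ^ N * ‖w‖ ^ k) := by ring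
  -- the injection
  set i : ℕ × ℕ → ℕ × ℕ := fun p => (p.1 + p.2, p.1) with hidef
  have hinj : Function.Injective i := by
    rintro ⟨n, m⟩ ⟨n', m'⟩ h
    have h' : (n + m, n) = (n' + m', n') := h
    rw [Prod.mk.injEq] at h'
    obtain ⟨h1, h2⟩ := h'
    subst h2
    have hmm : m = m' := by omega
    subst hmm
    rfl
  have hsupp : Function.support g ⊆ Set.range i := by
    rintro ⟨N, k⟩ hNk
    rcases le_or_gt k N with h | h
    · refine ⟨(k, N - k), ?_⟩
      show (k + (N - k), k) = (N, k)
      have hkN : k + (N - k) = N := by omega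
      rw [hkN]
    · exfalso
      apply hNk
      show (-1 : ℂ) ^ k * Q ^ (k.choose 2) * gB Q N k * w ^ k * a ^ N = 0
      rw [gB_of_gt h]
      ring
  -- chain of equalities
  have step1 : ∑' n : ℕ, z ^ (2 * n) * q ^ (n ^ 2 + n) / qPoch a Q (n + 1)
      = ∑' n : ℕ, ∑' m : ℕ, f (n, m) := by
    apply tsum_congr
    intro n
    rw [div_eq_mul_inv, ← tsum_gB hQ n a ha, ← tsum_mul_left]
  have step2 : ∑' n : ℕ, ∑' m : ℕ, f (n, m) = ∑' p : ℕ × ℕ, f p :=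
    (Summable.tsum_prod' hfsum fun b => hfsum.prod_factor b).symm
  have step3 : ∑' p : ℕ × ℕ, f p = ∑' p : ℕ × ℕ, g p := by
    rw [← hinj.tsum_eq hsupp]
    exact tsum_congr fun p => hfg p
  have step4 : ∑' p : ℕ × ℕ, g p = ∑' N : ℕ, ∑' k : ℕ, g (N, k) :=
    Summable.tsum_prod' hgsum fun b => hgsum.prod_factor b
  have step5 : ∀ N : ℕ, ∑' k : ℕ, g (N, k) = qPoch w Q N * a ^ N := by
    intro N
    have hfin : ∀ k ∉ Finset.range (N + 1), g (N, k) = 0 := by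
      intro k hk
      rw [Finset.mem_range] at hk
      show (-1 : ℂ) ^ k * Q ^ (k.choose 2) * gB Q N k * w ^ k * a ^ N = 0
      rw [gB_of_gt (by omega)]
      ring
    rw [tsum_eq_sum hfin, qPoch_eq_sum hQ w N, Finset.sum_mul]
  rw [step1, step2, step3, step4]
  exact tsum_congr step5
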